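/- Let p be a prime, let G be a finite noncyclic p-group, and let K be a homomorphic image of G (i.e., there is a surjective group homomorphism from G onto K). If K is not powerful, then σ_P(K) ≤ σ_P(G). -/

import Mathlib

/-- A finite `p`-group `H` is *powerful* if, when `p` is odd, `[H,H]` is contained in the
subgroup generated by `p`-th powers, and when `p = 2`, `[H,H]` is contained in the subgroup
generated by fourth powers. -/
def IsPowerful (p : ℕ) (H : Type*) [Group H] : Prop :=
  commutator H ≤ Subgroup.closure {x : H | ∃ g : H, x = g ^ (if p = 2 then 4 else p)}

/-- A cover of a group by proper subgroups. -/
def IsSubgroupCover {G : Type*} [Group G] (S : Finset (Subgroup G)) : Prop :=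
  (∀ H ∈ S, H ≠ ⊤) ∧ ∀ g : G, ∃ H ∈ S, g ∈ H

/-- The powerful covering number `σ_P(G)`: the least number of subgroups in a cover of `G`
by proper powerful subgroups. -/
noncomputable def powerfulCoveringNumber (p : ℕ) (G : Type*) [Group G] : ℕ :=
  sInf {n : ℕ | ∃ S : Finset (Subgroup G),
    S.card = n ∧ IsSubgroupCover S ∧ ∀ H ∈ S, IsPowerful p H}

lemma isPowerful_of_surjective (p : ℕ) {A B : Type*} [Group A] [Group B]
    (f : A →* B) (hf : Function.Surjective f) (h : IsPowerful p A) : IsPowerful p B := by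
  unfold IsPowerful at *
  have h1 : commutator B = (commutator A).map f := by
    rw [commutator_def, commutator_def, Subgroup.map_commutator,
      Subgroup.map_top_of_surjective f hf]
  rw [h1]
  calc (commutator A).map f
      ≤ (Subgroup.closure {x : A | ∃ g : A, x = g ^ (if p = 2 then 4 else p)}).map f :=
        Subgroup.map_mono h
    _ = Subgroup.closure (f '' {x : A | ∃ g : A, x = g ^ (if p = 2 then 4 else p)}) :=
        (MonoidHom.map_closure f _)
    _ ≤ Subgroup.closure {x : B | ∃ g : B, x = g ^ (if p = 2 then 4 else p)} := by
        apply Subgroup.closure_mono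
        rintro _ ⟨x, ⟨g, rfl⟩, rfl⟩
        exact ⟨f g, by rw [map_pow]⟩

lemma isPowerful_of_comm (p : ℕ) {A : Type*} [Group A]
    (h : ∀ a b : A, a * b = b * a) : IsPowerful p A := by
  unfold IsPowerful
  rw [commutator_def, Subgroup.commutator_le]
  intro g _ h' _
  open scoped commutatorElement in
  have : ⁅g, h'⁆ = 1 := by
    rw [commutatorElement_def, h g h']
    group
  rw [this]
  exact Subgroup.one_mem _

/-- If `K` is a non-powerful homomorphic image of the finite noncyclic `p`-group `G`,
then `σ_P(K) ≤ σ_P(G)`. -/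
theorem powerfulCoveringNumber_image_le
    (p : ℕ) (hp : p.Prime) (G K : Type*) [Group G] [Finite G] [Group K]
    (hG : IsPGroup p G) (hnc : ¬ IsCyclic G)
    (α : G →* K) (hα : Function.Surjective α)
    (hK : ¬ IsPowerful p K) :
    powerfulCoveringNumber p K ≤ powerfulCoveringNumber p G := by
  classical
  have := Fintype.ofFinite G
  -- G has a cover by cyclic subgroups, so the defining set for G is nonempty
  have hne : {n : ℕ | ∃ S : Finset (Subgroup G),
      S.card = n ∧ IsSubgroupCover S ∧ ∀ H ∈ S, IsPowerful p H}.Nonempty := by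
    refine ⟨_, (Finset.univ : Finset G).image (fun g => Subgroup.zpowers g), rfl, ⟨?_, ?_⟩, ?_⟩
    · rintro H hH
      simp only [Finset.mem_image, Finset.mem_univ, true_and] at hH
      obtain ⟨g, rfl⟩ := hH
      intro htop
      exact hnc ⟨⟨g, fun x => Subgroup.mem_zpowers_iff.mp (htop ▸ Subgroup.mem_top x)⟩⟩
    · intro g
      exact ⟨Subgroup.zpowers g, Finset.mem_image_of_mem _ (Finset.mem_univ g),
        Subgroup.mem_zpowers g⟩
    · rintro H hH
      simp only [Finset.mem_image, Finset.mem_univ, true_and] at hH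
      obtain ⟨g, rfl⟩ := hH
      refine isPowerful_of_comm p ?_
      rintro ⟨a, m, rfl⟩ ⟨b, n, rfl⟩
      ext
      exact (Commute.zpow_zpow_self g m n).eq
  obtain ⟨S, hScard, ⟨hSproper, hScover⟩, hSpow⟩ := Nat.sInf_mem hne
  -- map the cover forward
  refine le_trans (Nat.sInf_le ⟨S.image (Subgroup.map α), rfl, ⟨?_, ?_⟩, ?_⟩)
    (le_trans Finset.card_image_le (le_of_eq hScard))
  · rintro H hH
    simp only [Finset.mem_image] at hH
    obtain ⟨H₀, hH₀, rfl⟩ := hH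
    intro htop
    apply hK
    -- α restricted to H₀ is then surjective onto K, and H₀ is powerful
    have hsurj : Function.Surjective (α.comp H₀.subtype) := by
      intro k
      have hk : k ∈ Subgroup.map α H₀ := htop ▸ Subgroup.mem_top k
      obtain ⟨x, hx, hxk⟩ := hk
      exact ⟨⟨x, hx⟩, hxk⟩
    exact isPowerful_of_surjective p _ hsurj (hSpow H₀ hH₀)
  · intro k
    obtain ⟨g, rfl⟩ := hα k
    obtain ⟨H, hH, hg⟩ := hScover g
    exact ⟨H.map α, Finset.mem_image_of_mem _ hH, Subgroup.mem_map_of_mem α hg⟩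
  · rintro H hH
    simp only [Finset.mem_image] at hH
    obtain ⟨H₀, hH₀, rfl⟩ := hH
    exact isPowerful_of_surjective p (α.subgroupMap H₀)
      (MonoidHom.subgroupMap_surjective α H₀) (hSpow H₀ hH₀)
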